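/- Let Q ∈ ℝ^{n×n}, c ∈ ℝⁿ, A ∈ ℝ^{m×n}, and let x⁰ ∈ ℝⁿ with x⁰ ≥ 0. Then the infimum of ‖Q − Q̄‖_f² + ‖c − c̄‖² over all (Q̄, c̄, y, s) satisfying Aᵀy + s − Q̄x⁰ = c̄, (x⁰)ᵀs = 0, s ≥ 0 is attained: there exist Q̄* ∈ ℝ^{n×n}, c̄* ∈ ℝⁿ, y* ∈ ℝ^m, s* ∈ ℝⁿ feasible for these constraints achieving the minimum value. -/

import Mathlib

open Matrix Set

section ConeClosed

variable {E : Type*} [NormedAddCommGroup E] [NormedSpace ℝ E] [FiniteDimensional ℝ E]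

/-- A finitely generated convex cone is closed. -/
theorem isClosed_cone : ∀ (k : ℕ) (v : Fin k → E),
    IsClosed {x | ∃ t : Fin k → ℝ, (∀ i, 0 ≤ t i) ∧ ∑ i, t i • v i = x} := by
  intro k
  induction k with
  | zero =>
    intro v
    have h : {x | ∃ t : Fin 0 → ℝ, (∀ i, 0 ≤ t i) ∧ ∑ i, t i • v i = x} = {0} := by
      ext x
      constructor
      · rintro ⟨t, -, rfl⟩; simp
      · rintro rfl; exact ⟨0, fun i => i.elim0, by simp⟩
    rw [h]; exact isClosed_singleton
  | succ k ih =>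
    intro v
    by_cases hli : LinearIndependent ℝ v
    · -- linearly independent generators: closed embedding of the orthant
      let T : (Fin (k+1) → ℝ) →ₗ[ℝ] E :=
        { toFun := fun t => ∑ i, t i • v i
          map_add' := fun a b => by
            simp [add_smul, Finset.sum_add_distrib]
          map_smul' := fun cc a => by
            simp [mul_smul, Finset.smul_sum] }
      have hT : ∀ t, T t = ∑ i, t i • v i := fun t => rfl
      have hset : {x | ∃ t : Fin (k+1) → ℝ, (∀ i, 0 ≤ t i) ∧ ∑ i, t i • v i = x}
          = T '' {t | ∀ i, 0 ≤ t i} := by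
        ext x
        constructor
        · rintro ⟨t, ht, rfl⟩; exact ⟨t, ht, rfl⟩
        · rintro ⟨t, ht, rfl⟩; exact ⟨t, ht, rfl⟩
      have horth : IsClosed {t : Fin (k+1) → ℝ | ∀ i, 0 ≤ t i} := by
        have h : {t : Fin (k+1) → ℝ | ∀ i, 0 ≤ t i}
            = ⋂ i, (fun t : Fin (k+1) → ℝ => t i) ⁻¹' Set.Ici 0 := by
          ext t; simp [Set.mem_iInter]
        rw [h]
        exact isClosed_iInter fun i => isClosed_Ici.preimage (continuous_apply i)
      have hker : LinearMap.ker T = ⊥ := by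
        rw [LinearMap.ker_eq_bot']
        intro t ht
        funext i
        exact Fintype.linearIndependent_iff.1 hli t ht i
      rw [hset]
      exact (T.isClosedEmbedding_of_injective hker).isClosedMap _ horth
    · obtain ⟨g₀, hg₀, i₁, hi₁⟩ := Fintype.not_linearIndependent_iff.1 hli
      have key : ∀ g : Fin (k+1) → ℝ, (∑ i, g i • v i = 0) → (∃ i, 0 < g i) →
          IsClosed {x | ∃ t : Fin (k+1) → ℝ, (∀ i, 0 ≤ t i) ∧ ∑ i, t i • v i = x} := by
        intro g hg hpos
        have hsub : {x | ∃ t : Fin (k+1) → ℝ, (∀ i, 0 ≤ t i) ∧ ∑ i, t i • v i = x}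
            = ⋃ i ∈ {i : Fin (k+1) | 0 < g i},
              {x | ∃ t : Fin k → ℝ, (∀ j, 0 ≤ t j) ∧ ∑ j, t j • v (i.succAbove j) = x} := by
          ext x
          constructor
          · rintro ⟨t, ht, rfl⟩
            obtain ⟨ipos, hipos⟩ := hpos
            have hPne : (Finset.univ.filter fun i => 0 < g i).Nonempty :=
              ⟨ipos, by simp [hipos]⟩
            obtain ⟨i₀, hi₀mem, hmin⟩ :=
              (Finset.univ.filter fun i => 0 < g i).exists_min_image (fun i => t i / g i) hPne
            have hgi₀ : 0 < g i₀ := (Finset.mem_filter.1 hi₀mem).2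
            set α := t i₀ / g i₀ with hα
            have hα0 : 0 ≤ α := div_nonneg (ht i₀) hgi₀.le
            set t' := t - α • g with ht'
            have ht'0 : ∀ i, 0 ≤ t' i := by
              intro i
              simp only [ht', Pi.sub_apply, Pi.smul_apply, smul_eq_mul, sub_nonneg]
              by_cases hgi : 0 < g i
              · have h2 := hmin i (Finset.mem_filter.2 ⟨Finset.mem_univ i, hgi⟩)
                rw [div_le_div_iff₀ hgi₀ hgi] at h2
                rw [hα, div_mul_eq_mul_div, div_le_iff₀ hgi₀]
                linarith
              · nlinarith [ht i, not_lt.1 hgi]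
            have ht'i₀ : t' i₀ = 0 := by
              simp only [ht', Pi.sub_apply, Pi.smul_apply, smul_eq_mul, hα]
              field_simp
              ring
            have hsum : ∑ i, t' i • v i = ∑ i, t i • v i := by
              simp only [ht', Pi.sub_apply, Pi.smul_apply, smul_eq_mul, sub_smul, mul_smul]
              rw [Finset.sum_sub_distrib, ← Finset.smul_sum, hg, smul_zero, sub_zero]
            refine Set.mem_biUnion (show i₀ ∈ {i : Fin (k+1) | 0 < g i} from hgi₀) ?_
            refine ⟨fun j => t' (i₀.succAbove j), fun j => ht'0 _, ?_⟩
            rw [← hsum, Fin.sum_univ_succAbove (fun i => t' i • v i) i₀, ht'i₀, zero_smul,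
              zero_add]
          · intro hx
            rw [Set.mem_iUnion₂] at hx
            obtain ⟨i, -, t, ht, rfl⟩ := hx
            set t'' := Fin.insertNth (α := fun _ => ℝ) i 0 t with ht''
            have h0le : ∀ j, 0 ≤ t'' j := by
              have hle : (0 : ∀ _ : Fin (k+1), ℝ) ≤ t'' :=
                Fin.le_insertNth_iff.2 ⟨le_rfl, fun j => ht j⟩
              exact fun j => hle j
            refine ⟨t'', h0le, ?_⟩
            rw [Fin.sum_univ_succAbove (fun j => t'' j • v j) i]
            simp [ht'']
        rw [hsub]
        exact Set.Finite.isClosed_biUnion (Set.toFinite _) fun i _ => ih _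
      rcases lt_or_gt_of_ne hi₁ with h | h
      · refine key (-g₀) ?_ ⟨i₁, by simpa using h⟩
        simp only [Pi.neg_apply, neg_smul, Finset.sum_neg_distrib]
        rw [hg₀, neg_zero]
      · exact key g₀ hg₀ ⟨i₁, h⟩

/-- The image of the nonnegative orthant under a linear map is closed. -/
theorem isClosed_image_orthant' {ι : Type*} [Fintype ι] (f : (ι → ℝ) →ₗ[ℝ] E) :
    IsClosed (f '' {t | ∀ i, 0 ≤ t i}) := by
  classical
  let e := Fintype.equivFin ι
  have hrep : ∀ t : ι → ℝ, f t = ∑ i, t i • f (Pi.single i 1) := by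
    intro t
    conv_lhs => rw [← Finset.univ_sum_single t]
    rw [map_sum]
    refine Finset.sum_congr rfl fun i _ => ?_
    rw [← _root_.map_smul]
    congr 1
    funext j
    simp [Pi.single_apply, mul_ite]
  have h : f '' {t | ∀ i, 0 ≤ t i}
      = {x | ∃ t : Fin (Fintype.card ι) → ℝ, (∀ i, 0 ≤ t i) ∧
          ∑ j, t j • f (Pi.single (e.symm j) 1) = x} := by
    ext x
    constructor
    · rintro ⟨t, ht, rfl⟩
      refine ⟨fun j => t (e.symm j), fun j => ht _, ?_⟩
      rw [hrep]
      exact Fintype.sum_equiv e.symm _ _ fun j => rfl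
    · rintro ⟨t, ht, rfl⟩
      refine ⟨fun i => t (e i), fun i => ht _, ?_⟩
      rw [hrep]
      refine (Fintype.sum_equiv e.symm _ _ fun j => ?_).symm
      simp
  rw [h]
  exact isClosed_cone _ _

end ConeClosed

open Matrix

/-- The infimum in the inverse KKT problem (IQP) at a point `x⁰ ≥ 0`
is attained: there exists a feasible tuple `(Q̄*, c̄*, y*, s*)` whose objective value
`‖Q − Q̄*‖_f² + ‖c − c̄*‖²` is minimal among all feasible tuples. -/
theorem IQP_min_attained (n m : ℕ) (Q : Matrix (Fin n) (Fin n) ℝ) (c : Fin n → ℝ)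
    (A : Matrix (Fin m) (Fin n) ℝ) (x0 : Fin n → ℝ) (hx0 : 0 ≤ x0) :
    ∃ (Qbar : Matrix (Fin n) (Fin n) ℝ) (cbar : Fin n → ℝ)
      (y : Fin m → ℝ) (s : Fin n → ℝ),
      (Aᵀ.mulVec y + s - Qbar.mulVec x0 = cbar ∧ x0 ⬝ᵥ s = 0 ∧ 0 ≤ s) ∧
      ∀ (Qbar' : Matrix (Fin n) (Fin n) ℝ) (cbar' : Fin n → ℝ)
        (y' : Fin m → ℝ) (s' : Fin n → ℝ),
        (Aᵀ.mulVec y' + s' - Qbar'.mulVec x0 = cbar' ∧ x0 ⬝ᵥ s' = 0 ∧ 0 ≤ s') →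
        (∑ i, ∑ j, (Q i j - Qbar i j) ^ 2) + ∑ i, (c i - cbar i) ^ 2 ≤
          (∑ i, ∑ j, (Q i j - Qbar' i j) ^ 2) + ∑ i, (c i - cbar' i) ^ 2 := by
  classical
  set κ := (Fin n × Fin n) ⊕ Fin n with hκ
  set ι := ((Fin n × Fin n) ⊕ (Fin n × Fin n)) ⊕ ((Fin m ⊕ Fin m) ⊕ Fin n) with hι
  -- component extractors
  let Mt : (ι → ℝ) → Fin n → Fin n → ℝ := fun t i j => t (.inl (.inl (i, j))) - t (.inl (.inr (i, j)))
  let yt : (ι → ℝ) → Fin m → ℝ := fun t k => t (.inr (.inl (.inl k))) - t (.inr (.inl (.inr k)))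
  let st : (ι → ℝ) → Fin n → ℝ := fun t i => (if x0 i = 0 then (1:ℝ) else 0) * t (.inr (.inr i))
  let φ : (Matrix (Fin n) (Fin n) ℝ) → (Fin n → ℝ) → EuclideanSpace ℝ κ :=
    fun M v => (WithLp.equiv 2 (κ → ℝ)).symm (Sum.elim (fun p => M p.1 p.2) v)
  let F : (ι → ℝ) →ₗ[ℝ] EuclideanSpace ℝ κ :=
    { toFun := fun t => φ (Mt t) (fun i => (∑ k, Aᵀ i k * yt t k) + st t i - ∑ j, Mt t i j * x0 j)
      map_add' := by
        intro a b
        ext p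
        cases p with
        | inl p => simp [φ, PiLp.add_apply, WithLp.equiv_symm_apply, PiLp.toLp_apply, Mt]; ring
        | inr i =>
          simp only [φ, Mt, yt, st, Pi.add_apply, PiLp.add_apply, WithLp.equiv_symm_apply, PiLp.toLp_apply,
            Sum.elim_inr, mul_add, mul_sub, sub_mul, add_mul, Finset.sum_add_distrib, Finset.sum_sub_distrib]
          ring
      map_smul' := by
        intro cc a
        ext p
        cases p with
        | inl p => simp [φ, PiLp.smul_apply, WithLp.equiv_symm_apply, PiLp.toLp_apply, Mt]; ring
        | inr i =>
          simp only [φ, Mt, yt, st, Pi.smul_apply, PiLp.smul_apply, smul_eq_mul,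
            WithLp.equiv_symm_apply, PiLp.toLp_apply, Sum.elim_inr, RingHom.id_apply, mul_add, mul_sub, sub_mul,
            Finset.mul_sum, Finset.sum_sub_distrib, mul_comm, mul_assoc, mul_left_comm] }
  have hF : ∀ t p, F t p = Sum.elim (fun p : Fin n × Fin n => Mt t p.1 p.2)
      (fun i => (∑ k, Aᵀ i k * yt t k) + st t i - ∑ j, Mt t i j * x0 j) p := fun t p => rfl
  set Kset := F '' {t | ∀ i, 0 ≤ t i} with hKset
  have hclosed : IsClosed Kset := isClosed_image_orthant' F
  set u : EuclideanSpace ℝ κ := φ Q c with hu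
  -- objective = squared distance
  have hobj : ∀ (M : Matrix (Fin n) (Fin n) ℝ) (v : Fin n → ℝ),
      ‖u - φ M v‖ ^ 2 = (∑ i, ∑ j, (Q i j - M i j) ^ 2) + ∑ i, (c i - v i) ^ 2 := by
    intro M v
    rw [EuclideanSpace.norm_eq]
    rw [Real.sq_sqrt (by positivity)]
    rw [Fintype.sum_sum_type]
    congr 1
    · rw [Fintype.sum_prod_type]
      refine Finset.sum_congr rfl fun i _ => Finset.sum_congr rfl fun j _ => ?_
      simp [u, φ, PiLp.sub_apply, WithLp.equiv_symm_apply, PiLp.toLp_apply, Real.norm_eq_abs, sq_abs]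
    · refine Finset.sum_congr rfl fun i _ => ?_
      simp [u, φ, PiLp.sub_apply, WithLp.equiv_symm_apply, PiLp.toLp_apply, Real.norm_eq_abs, sq_abs]
  -- membership of feasible points
  have hmem : ∀ (Qb : Matrix (Fin n) (Fin n) ℝ) (cb : Fin n → ℝ) (y : Fin m → ℝ) (s : Fin n → ℝ),
      (Aᵀ.mulVec y + s - Qb.mulVec x0 = cb ∧ x0 ⬝ᵥ s = 0 ∧ 0 ≤ s) → φ Qb cb ∈ Kset := by
    rintro Qb cb y s ⟨hfeas, hcomp, hs⟩
    have hszero : ∀ i, x0 i ≠ 0 → s i = 0 := by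
      intro i hxi
      have hterm : ∀ j ∈ Finset.univ, (0:ℝ) ≤ x0 j * s j := fun j _ => mul_nonneg (hx0 j) (hs j)
      have := (Finset.sum_eq_zero_iff_of_nonneg hterm).1 hcomp i (Finset.mem_univ i)
      rcases mul_eq_zero.1 this with h | h
      · exact absurd h hxi
      · exact h
    refine ⟨fun idx => Sum.elim
        (Sum.elim (fun p => max (Qb p.1 p.2) 0) (fun p => max (-Qb p.1 p.2) 0))
        (Sum.elim (Sum.elim (fun k => max (y k) 0) (fun k => max (-y k) 0)) s) idx,
      ?_, ?_⟩
    · rintro (⟨p | p⟩ | ⟨k | k⟩ | i)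
      · exact le_max_right _ _
      · exact le_max_right _ _
      · exact le_max_right _ _
      · exact le_max_right _ _
      · exact hs i
    · ext p
      rw [hF]
      have hmax : ∀ a : ℝ, max a 0 - max (-a) 0 = a := fun a =>
        max_zero_sub_max_neg_zero_eq_self a
      cases p with
      | inl p =>
        simp only [Sum.elim_inl, Mt, φ, WithLp.equiv_symm_apply, PiLp.toLp_apply]
        exact hmax _
      | inr i =>
        have h1 : (if x0 i = 0 then (1:ℝ) else 0) * s i = s i := by
          split_ifs with h
          · rw [one_mul]
          · rw [zero_mul]; exact (hszero i h).symm
        rw [← hfeas]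
        simp only [Sum.elim_inr, Sum.elim_inl, Mt, yt, st, φ, WithLp.equiv_symm_apply, PiLp.toLp_apply,
          Pi.add_apply, Pi.sub_apply, Matrix.mulVec, dotProduct,
          max_zero_sub_max_neg_zero_eq_self]
        rw [h1]
  -- every element of Kset is feasible
  have hKfeas : ∀ w ∈ Kset, ∃ (Qb : Matrix (Fin n) (Fin n) ℝ) (cb : Fin n → ℝ)
      (y : Fin m → ℝ) (s : Fin n → ℝ),
      (Aᵀ.mulVec y + s - Qb.mulVec x0 = cb ∧ x0 ⬝ᵥ s = 0 ∧ 0 ≤ s) ∧ w = φ Qb cb := by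
    rintro w ⟨t, ht, rfl⟩
    refine ⟨Matrix.of (Mt t), fun i => (∑ k, Aᵀ i k * yt t k) + st t i - ∑ j, Mt t i j * x0 j,
      yt t, st t, ⟨?_, ?_, ?_⟩, ?_⟩
    · funext i
      simp only [Pi.add_apply, Pi.sub_apply, Matrix.mulVec, dotProduct, Matrix.of_apply]
    · refine Finset.sum_eq_zero fun i _ => ?_
      simp only [st]
      split_ifs with h
      · rw [h, zero_mul]
      · rw [zero_mul, mul_zero]
    · intro i
      simp only [st]
      split_ifs with h
      · rw [one_mul]; exact ht _
      · rw [zero_mul]; exact le_rfl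
    · rfl
  -- compactness: minimize distance on Kset ∩ closed ball
  have h0K : (0 : EuclideanSpace ℝ κ) ∈ Kset := ⟨0, fun i => le_refl 0, map_zero F⟩
  have hball : IsCompact (Kset ∩ Metric.closedBall u ‖u‖) :=
    (isCompact_closedBall u ‖u‖).inter_left hclosed
  have hne : (Kset ∩ Metric.closedBall u ‖u‖).Nonempty :=
    ⟨0, h0K, by simp [Metric.mem_closedBall, dist_eq_norm]⟩
  obtain ⟨v, hvmem, hvmin⟩ := hball.exists_isMinOn hne
    ((continuous_const.sub continuous_id).norm.continuousOn :
      ContinuousOn (fun w => ‖u - w‖) _)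
  have hvK : v ∈ Kset := hvmem.1
  have hmin : ∀ w ∈ Kset, ‖u - v‖ ≤ ‖u - w‖ := by
    intro w hw
    by_cases hb : w ∈ Metric.closedBall u ‖u‖
    · exact hvmin ⟨hw, hb⟩
    · have h1 : ‖u - v‖ ≤ ‖u - 0‖ :=
        hvmin ⟨h0K, by simp [Metric.mem_closedBall, dist_eq_norm]⟩
      rw [sub_zero] at h1
      have h2 : ‖u‖ < ‖u - w‖ := by
        rw [Metric.mem_closedBall, not_le, dist_comm] at hb
        exact lt_of_lt_of_eq hb (dist_eq_norm u w)
      linarith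
  obtain ⟨Qb, cb, y, s, hfeas, rfl⟩ := hKfeas v hvK
  refine ⟨Qb, cb, y, s, hfeas, ?_⟩
  intro Qb' cb' y' s' hfeas'
  have h1 := hmin _ (hmem Qb' cb' y' s' hfeas')
  have h2 := pow_le_pow_left₀ (norm_nonneg _) h1 2
  rw [hobj, hobj] at h2
  exact h2
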